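/- The action of W on the interior of the Tits cone is such that the closed fundamental chamber C̄ is a fundamental domain: for every v in the Tits cone there exists w ∈ W with w(v) ∈ C̄, and if v, v' ∈ C̄ and w(v) = v' for some w ∈ W, then v = v'. -/
import Mathlib


open scoped Classical

/-- A geometric representation (with based root system) of a Coxeter system `cs`
on a real vector space `V`, preserving a symmetric bilinear form `form`, with
simple roots `root i` satisfying the standard inner products
`B(α_i, α_j) = -cos (π / m i j)` (with value `≤ -1` when `m i j = ∞`, encoded `0`). -/
structure GeomRep {B : Type*} {W : Type*} [Group W] (M : CoxeterMatrix B)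
    (cs : CoxeterSystem M W) (V : Type*) [AddCommGroup V] [Module ℝ V] where
  form : LinearMap.BilinForm ℝ V
  form_symm : ∀ u v : V, form u v = form v u
  ρ : W →* (V ≃ₗ[ℝ] V)
  ρ_faithful : Function.Injective ρ
  root : B → V
  root_indep : LinearIndependent ℝ root
  form_preserved : ∀ (w : W) (u v : V), form (ρ w u) (ρ w v) = form u v
  form_root_finite : ∀ i j : B, M i j ≠ 0 →
    form (root i) (root j) = - Real.cos (Real.pi / (M i j : ℝ))
  form_root_infinite : ∀ i j : B, M i j = 0 → form (root i) (root j) ≤ -1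
  simple_act : ∀ (i : B) (v : V),
    ρ (cs.simple i) v = v - (2 * form (root i) v) • root i

namespace GeomRep

variable {B : Type*} {W : Type*} [Group W] {M : CoxeterMatrix B}
  {cs : CoxeterSystem M W} {V : Type*} [AddCommGroup V] [Module ℝ V]
  (G : GeomRep M cs V)

/-- The root system `Φ = W · Δ`. -/
def Roots : Set V := {v | ∃ (w : W) (i : B), v = G.ρ w (G.root i)}

/-- `v` is a nonnegative linear combination of simple roots. -/
def IsNonnegComb (v : V) : Prop :=
  ∃ c : B →₀ ℝ, (∀ i, 0 ≤ c i) ∧ v = c.sum fun i a => a • G.root i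

/-- The set of positive roots `Φ⁺`. -/
def PosRoots : Set V := {v ∈ G.Roots | G.IsNonnegComb v}

/-- The set of negative roots `Φ⁻ = -Φ⁺`. -/
def NegRoots : Set V := {v ∈ G.Roots | G.IsNonnegComb (-v)}

/-- The reflection in a root `α`, as a linear endomorphism of `V`. -/
def refl (α : V) : Module.End ℝ V :=
  LinearMap.id - (2 : ℝ) • LinearMap.smulRight (G.form α) α

/-- The (left) inversion set `N(w) = Φ⁺ ∩ w(Φ⁻)`. -/
def invSet (w : W) : Set V := {β ∈ G.PosRoots | G.ρ w⁻¹ β ∈ G.NegRoots}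

/-- `β` dominates `α` : every `w` sending `β` negative sends `α` negative. -/
def Dominates (β α : V) : Prop := ∀ w : W, G.ρ w β ∈ G.NegRoots → G.ρ w α ∈ G.NegRoots

/-- A small root: a positive root dominating no positive root other than itself. -/
def IsSmall (β : V) : Prop :=
  β ∈ G.PosRoots ∧ ∀ α ∈ G.PosRoots, G.Dominates β α → α = β

/-- The conical (nonnegative) hull of a set. -/
def cone (X : Set V) : Set V :=
  {v | ∃ c : V →₀ ℝ, (∀ x, 0 ≤ c x) ∧ ↑c.support ⊆ X ∧ v = c.sum fun x a => a • x}

/-- Low element: its inversion set is the biconvex closure of its small inversions. -/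
def IsLow (Sm : Set V) (w : W) : Prop :=
  G.invSet w = cone (G.invSet w ∩ Sm) ∩ G.PosRoots

/-- The closed fundamental chamber. -/
def chamber : Set V := {v | ∀ i : B, 0 ≤ G.form v (G.root i)}

/-- The Tits cone `T = ⋃_{w ∈ W} w(C̄)`. -/
def titsCone : Set V := ⋃ w : W, ⇑(G.ρ w) '' G.chamber

end GeomRep

section AuxWords

open CoxeterSystem List

variable {B : Type*} {W : Type*} [Group W] {M : CoxeterMatrix B} (cs : CoxeterSystem M W)

theorem myAltWord_split (i j : B) (m n : ℕ) :
    alternatingWord i j (m + n) =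
      (if Even m then alternatingWord i j n else alternatingWord j i n)
        ++ alternatingWord i j m := by
  induction n with
  | zero => simp [alternatingWord]
  | succ n ih =>
    rw [← Nat.add_assoc, alternatingWord_succ' i j (m + n), ih]
    rcases Nat.even_or_odd m with hm | hm
    · rw [if_pos hm, if_pos hm, alternatingWord_succ' i j n]
      rcases Nat.even_or_odd n with hn | hn
      · simp [Nat.even_add, hm, hn]
      · simp [Nat.even_add, hm, hn, Nat.not_even_iff_odd]
    · rw [if_neg (Nat.not_even_iff_odd.2 hm), if_neg (Nat.not_even_iff_odd.2 hm),
        alternatingWord_succ' j i n]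
      rcases Nat.even_or_odd n with hn | hn
      · simp [Nat.even_add, Nat.not_even_iff_odd.2 hm, hn]
      · simp [Nat.even_add, Nat.not_even_iff_odd.2 hm, Nat.not_even_iff_odd.2 hn]

theorem myLength_alt_mul_simple_le (i j : B) (m k : ℕ) (h1 : 1 ≤ m) (hmk : m ≤ k)
    (hbraid : cs.wordProd (alternatingWord i j m) = cs.wordProd (alternatingWord j i m)) :
    cs.length (cs.wordProd (alternatingWord i j k) * cs.simple i) ≤ k - 1 := by
  obtain ⟨m', rfl⟩ : ∃ m', m = m' + 1 := ⟨m - 1, by omega⟩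
  have hstep : cs.wordProd (alternatingWord i j k) * cs.simple i
      = cs.wordProd (alternatingWord j i (k + 1)) := by
    rw [alternatingWord_succ, cs.wordProd_concat]
  rw [hstep]
  have hsplit := myAltWord_split j i (m' + 1) (k + 1 - (m' + 1))
  rw [show m' + 1 + (k + 1 - (m' + 1)) = k + 1 by omega] at hsplit
  rw [hsplit, cs.wordProd_append, ← hbraid]
  -- now head letter of alternatingWord i j (m'+1)
  rw [alternatingWord_succ' i j m', cs.wordProd_cons]
  rcases Nat.even_or_odd (m' + 1) with hm | hm
  · -- m even, m' odd, head letter = i ; X = alternatingWord j i (k - m'), ends with i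
    have hm' : ¬ Even m' := by simpa [Nat.even_add_one] using hm
    rw [if_pos hm, if_neg hm']
    obtain ⟨r, hr⟩ : ∃ r, k + 1 - (m' + 1) = r + 1 := ⟨k - (m' + 1), by omega⟩
    rw [hr, alternatingWord_succ, cs.wordProd_concat, mul_assoc,
      ← mul_assoc (cs.simple i), cs.simple_mul_simple_self, one_mul]
    calc cs.length (cs.wordProd (alternatingWord i j r) * cs.wordProd (alternatingWord i j m'))
        ≤ cs.length (cs.wordProd (alternatingWord i j r))
          + cs.length (cs.wordProd (alternatingWord i j m')) := cs.length_mul_le _ _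
      _ ≤ r + m' := by
          have := cs.length_wordProd_le (alternatingWord i j r)
          have := cs.length_wordProd_le (alternatingWord i j m')
          simp [length_alternatingWord] at *
          omega
      _ ≤ k - 1 := by omega
  · have hm' : Even m' := by
      rcases Nat.even_or_odd m' with h | h
      · exact h
      · exact absurd (by simpa [Nat.even_add_one, Nat.not_even_iff_odd] using h) (Nat.not_even_iff_odd.2 hm)
    rw [if_neg (Nat.not_even_iff_odd.2 hm), if_pos hm']
    obtain ⟨r, hr⟩ : ∃ r, k + 1 - (m' + 1) = r + 1 := ⟨k - (m' + 1), by omega⟩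
    rw [hr, alternatingWord_succ, cs.wordProd_concat, mul_assoc,
      ← mul_assoc (cs.simple j), cs.simple_mul_simple_self, one_mul]
    calc cs.length (cs.wordProd (alternatingWord j i r) * cs.wordProd (alternatingWord i j m'))
        ≤ cs.length (cs.wordProd (alternatingWord j i r))
          + cs.length (cs.wordProd (alternatingWord i j m')) := cs.length_mul_le _ _
      _ ≤ r + m' := by
          have := cs.length_wordProd_le (alternatingWord j i r)
          have := cs.length_wordProd_le (alternatingWord i j m')
          simp [length_alternatingWord] at *
          omega
      _ ≤ k - 1 := by omega

end AuxWords


noncomputable def chebySeq (c : ℝ) : ℕ → ℝ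
  | 0 => 0
  | 1 => 1
  | (n + 2) => (-2 * c) * chebySeq c (n + 1) - chebySeq c n

theorem chebySeq_zero (c : ℝ) : chebySeq c 0 = 0 := rfl
theorem chebySeq_one (c : ℝ) : chebySeq c 1 = 1 := rfl
theorem chebySeq_add_two (c : ℝ) (n : ℕ) :
    chebySeq c (n + 2) = (-2 * c) * chebySeq c (n + 1) - chebySeq c n := rfl

theorem chebySeq_mono (c : ℝ) (hc : c ≤ -1) :
    ∀ n, 0 ≤ chebySeq c n ∧ chebySeq c n ≤ chebySeq c (n + 1) := by
  intro n
  induction n with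
  | zero => simp [chebySeq_zero, chebySeq_one]
  | succ n ih =>
    obtain ⟨h0, h1⟩ := ih
    have h0' : 0 ≤ chebySeq c (n + 1) := le_trans h0 h1
    refine ⟨h0', ?_⟩
    rw [chebySeq_add_two]
    nlinarith

theorem sin_pos_div (m : ℕ) (hm : 2 ≤ m) : 0 < Real.sin (Real.pi / m) := by
  apply Real.sin_pos_of_pos_of_lt_pi
  · positivity
  · calc Real.pi / m ≤ Real.pi / 2 := by
          apply div_le_div_of_nonneg_left Real.pi_pos.le (by norm_num)
          exact_mod_cast hm
      _ < Real.pi := by linarith [Real.pi_pos]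

theorem chebySeq_eq_sin (m : ℕ) (hm : 2 ≤ m) (n : ℕ) :
    chebySeq (-Real.cos (Real.pi / m)) n = Real.sin (n * (Real.pi / m)) / Real.sin (Real.pi / m) := by
  have hs : Real.sin (Real.pi / m) ≠ 0 := (sin_pos_div m hm).ne'
  induction n using Nat.strong_induction_on with
  | _ n ih =>
    match n with
    | 0 => simp [chebySeq_zero]
    | 1 => simp [chebySeq_one, div_self hs]
    | (n + 2) =>
      rw [chebySeq_add_two, ih (n + 1) (by omega), ih n (by omega)]
      have e1 : ((n : ℝ) + 2) * (Real.pi / m) = ((n : ℝ) + 1) * (Real.pi / m) + Real.pi / m := by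
        ring
      have e2 : (n : ℝ) * (Real.pi / m) = ((n : ℝ) + 1) * (Real.pi / m) - Real.pi / m := by
        ring
      push_cast
      rw [e1, e2, Real.sin_add, Real.sin_sub]
      field_simp
      ring

theorem chebySeq_nonneg_finite (m : ℕ) (hm : 2 ≤ m) (n : ℕ) (hn : n ≤ m) :
    0 ≤ chebySeq (-Real.cos (Real.pi / m)) n := by
  rw [chebySeq_eq_sin m hm]
  apply div_nonneg _ (sin_pos_div m hm).le
  apply Real.sin_nonneg_of_nonneg_of_le_pi
  · positivity
  · calc (n : ℝ) * (Real.pi / m) = (n / m) * Real.pi := by ring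
      _ ≤ 1 * Real.pi := by
          apply mul_le_mul_of_nonneg_right _ Real.pi_pos.le
          rw [div_le_one (by exact_mod_cast (by omega : 0 < m))]
          exact_mod_cast hn
      _ = Real.pi := one_mul _


namespace GeomRep

open CoxeterSystem

variable {B : Type*} {W : Type*} [Group W] {M : CoxeterMatrix B}
  {cs : CoxeterSystem M W} {V : Type*} [AddCommGroup V] [Module ℝ V]
  (G : GeomRep M cs V)

theorem rho_mul (a b : W) (x : V) : G.ρ (a * b) x = G.ρ a (G.ρ b x) := by
  rw [map_mul]; rfl

theorem rho_one (x : V) : G.ρ 1 x = x := by rw [map_one]; rfl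

theorem form_root_self (i : B) : G.form (G.root i) (G.root i) = 1 := by
  have h := G.form_root_finite i i (by simp [M.diagonal i])
  rw [M.diagonal i] at h
  simpa using h

theorem isNonnegComb_root (i : B) : G.IsNonnegComb (G.root i) := by
  refine ⟨Finsupp.single i 1, fun j => ?_, ?_⟩
  · rw [Finsupp.single_apply]
    split <;> norm_num
  · rw [Finsupp.sum_single_index] <;> simp

theorem isNonnegComb_smul_add {a b : ℝ} {x y : V} (ha : 0 ≤ a) (hb : 0 ≤ b)
    (hx : G.IsNonnegComb x) (hy : G.IsNonnegComb y) : G.IsNonnegComb (a • x + b • y) := by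
  obtain ⟨c, hc, rfl⟩ := hx
  obtain ⟨d, hd, rfl⟩ := hy
  have hlin : ∀ e : B →₀ ℝ, (e.sum fun i r => r • G.root i)
      = Finsupp.linearCombination ℝ G.root e := fun e => rfl
  refine ⟨a • c + b • d, fun i => ?_, ?_⟩
  · simp only [Finsupp.add_apply, Finsupp.smul_apply, smul_eq_mul]
    exact add_nonneg (mul_nonneg ha (hc i)) (mul_nonneg hb (hd i))
  · simp only [hlin, map_add, map_smul]

theorem form_nonneg_of_chamber {v u : V} (hv : v ∈ G.chamber) (hu : G.IsNonnegComb u) :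
    0 ≤ G.form v u := by
  obtain ⟨c, hc, rfl⟩ := hu
  rw [map_finsuppSum, Finsupp.sum]
  apply Finset.sum_nonneg
  intro i _
  rw [map_smul, smul_eq_mul]
  exact mul_nonneg (hc i) (hv i)

theorem rho_simple_root_self (i : B) : G.ρ (cs.simple i) (G.root i) = - G.root i := by
  rw [G.simple_act, G.form_root_self]
  norm_num
  module

theorem altWord_act (i j : B) (k : ℕ) :
    G.ρ (cs.wordProd (alternatingWord i j k)) (G.root i) =
      if Even k then
        chebySeq (G.form (G.root i) (G.root j)) (k + 1) • G.root i
          + chebySeq (G.form (G.root i) (G.root j)) k • G.root j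
      else
        chebySeq (G.form (G.root i) (G.root j)) k • G.root i
          + chebySeq (G.form (G.root i) (G.root j)) (k + 1) • G.root j := by
  set c := G.form (G.root i) (G.root j) with hc
  induction k with
  | zero =>
    simp [G.rho_one, chebySeq_zero, chebySeq_one, alternatingWord]
  | succ k ih =>
    rw [alternatingWord_succ', cs.wordProd_cons, G.rho_mul, ih]
    rcases Nat.even_or_odd k with hk | hk
    · have hk1 : ¬ Even (k + 1) := by simpa [Nat.even_add_one]
      rw [if_pos hk, if_pos hk, if_neg hk1, G.simple_act]
      have hji : G.form (G.root j) (G.root i) = c := G.form_symm _ _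
      rw [map_add, map_smul, map_smul, hji, G.form_root_self, smul_eq_mul, smul_eq_mul,
        chebySeq_add_two]
      module
    · have hk' : ¬ Even k := Nat.not_even_iff_odd.2 hk
      have hk1 : Even (k + 1) := by simpa [Nat.even_add_one]
      rw [if_neg hk', if_neg hk', if_pos hk1, G.simple_act]
      rw [map_add, map_smul, map_smul, hc, G.form_root_self, smul_eq_mul, smul_eq_mul,
        chebySeq_add_two]
      module

end GeomRep

namespace GeomRep

open CoxeterSystem

variable {B : Type*} {W : Type*} [Group W] {M : CoxeterMatrix B}
  {cs : CoxeterSystem M W} {V : Type*} [AddCommGroup V] [Module ℝ V]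
  (G : GeomRep M cs V)

theorem isNonnegComb_rho_root :
    ∀ (n : ℕ) (w : W), cs.length w = n → ∀ i : B, ¬ cs.IsRightDescent w i →
      G.IsNonnegComb (G.ρ w (G.root i)) := by
  intro n
  induction n using Nat.strong_induction_on with
  | _ n ih =>
    intro w hw i hi
    rcases eq_or_ne w 1 with rfl | hne
    · rw [G.rho_one]; exact G.isNonnegComb_root i
    obtain ⟨j, hj⟩ := cs.exists_rightDescent_of_ne_one hne
    have hn1 : 1 ≤ n := by
      rcases Nat.eq_zero_or_pos n with h | h
      · subst hw; exact absurd (cs.length_eq_zero_iff.mp h) hne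
      · exact h
    set P : ℕ → Prop := fun k => 1 ≤ k ∧
      cs.length (w * (cs.wordProd (alternatingWord i j k))⁻¹) + k = n with hPdef
    have hP1 : P 1 := by
      refine ⟨le_refl 1, ?_⟩
      have h1 : alternatingWord i j 1 = [j] := rfl
      rw [h1, cs.wordProd_singleton, cs.inv_simple, ← hw]
      exact cs.isRightDescent_iff.mp hj
    set k := Nat.findGreatest P n with hkdef
    have hPk : P k := Nat.findGreatest_spec hn1 hP1
    have hk1 : 1 ≤ k := hPk.1
    have hv : cs.length (w * (cs.wordProd (alternatingWord i j k))⁻¹) + k = n := hPk.2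
    set v := w * (cs.wordProd (alternatingWord i j k))⁻¹ with hvdef
    have hw_eq : w = v * cs.wordProd (alternatingWord i j k) := by
      rw [hvdef]; group
    have hmax : ¬ P (k + 1) := by
      intro h
      rcases Nat.lt_or_ge n (k + 1) with hlt | hge
      · have := h.2; omega
      · exact (Nat.findGreatest_is_greatest (Nat.lt_succ_self k) hge) h
    have ht : ¬ cs.IsRightDescent v (if Even k then j else i) := by
      intro hdesc
      apply hmax
      refine ⟨by omega, ?_⟩
      rw [alternatingWord_succ' i j k, cs.wordProd_cons, mul_inv_rev, cs.inv_simple, ← mul_assoc,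
        ← hvdef]
      have hd := cs.isRightDescent_iff.mp hdesc
      omega
    have ht' : ¬ cs.IsRightDescent v (if Even k then i else j) := by
      intro hdesc
      obtain ⟨k', hkk⟩ : ∃ k', k = k' + 1 := ⟨k - 1, by omega⟩
      have hsame : (if Even k then i else j) = (if Even k' then j else i) := by
        rw [hkk]
        rcases Nat.even_or_odd k' with h | h
        · simp [Nat.even_add_one, h]
        · simp [Nat.even_add_one, Nat.not_even_iff_odd.2 h]
      rw [hsame] at hdesc
      have hlen := cs.isRightDescent_iff.mp hdesc
      have hb : cs.length w ≤ cs.length (v * cs.simple (if Even k' then j else i)) + k' := by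
        conv_lhs => rw [hw_eq, hkk, alternatingWord_succ' i j k', cs.wordProd_cons, ← mul_assoc]
        calc cs.length (v * cs.simple (if Even k' then j else i)
              * cs.wordProd (alternatingWord i j k'))
            ≤ cs.length (v * cs.simple (if Even k' then j else i))
              + cs.length (cs.wordProd (alternatingWord i j k')) := cs.length_mul_le _ _
          _ ≤ cs.length (v * cs.simple (if Even k' then j else i)) + k' := by
              have h := cs.length_wordProd_le (alternatingWord i j k')
              rw [length_alternatingWord] at h
              omega
      rw [hw] at hb
      omega
    have hvi : ¬ cs.IsRightDescent v i := by
      by_cases h : Even k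
      · simpa [h] using ht'
      · simpa [h] using ht
    have hvj : ¬ cs.IsRightDescent v j := by
      by_cases h : Even k
      · simpa [h] using ht
      · simpa [h] using ht'
    have hkm : M i j ≠ 0 → k < M i j := by
      intro hm0
      by_contra hcon
      push_neg at hcon
      have hb : cs.wordProd (alternatingWord i j (M i j))
          = cs.wordProd (alternatingWord j i (M i j)) := by
        have hsym : M j i = M i j := M.symmetric j i
        have := cs.wordProd_braidWord_eq i j
        simpa [CoxeterSystem.braidWord, hsym] using this
      have hle := myLength_alt_mul_simple_le cs i j (M i j) k (by omega) hcon hb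
      have hws : cs.length (w * cs.simple i) ≤ cs.length v + (k - 1) := by
        rw [hw_eq, mul_assoc]
        calc cs.length (v * (cs.wordProd (alternatingWord i j k) * cs.simple i))
            ≤ cs.length v + cs.length (cs.wordProd (alternatingWord i j k) * cs.simple i) :=
              cs.length_mul_le _ _
          _ ≤ cs.length v + (k - 1) := by omega
      have hni := cs.not_isRightDescent_iff.mp hi
      omega
    have hnn : 0 ≤ chebySeq (G.form (G.root i) (G.root j)) k ∧
        0 ≤ chebySeq (G.form (G.root i) (G.root j)) (k + 1) := by
      rcases eq_or_ne (M i j) 0 with hm | hm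
      · have hc : G.form (G.root i) (G.root j) ≤ -1 := G.form_root_infinite i j hm
        exact ⟨(chebySeq_mono _ hc k).1, (chebySeq_mono _ hc (k + 1)).1⟩
      · have hklt := hkm hm
        have hm2 : 2 ≤ M i j := by omega
        have hc : G.form (G.root i) (G.root j) = - Real.cos (Real.pi / (M i j : ℝ)) :=
          G.form_root_finite i j hm
        rw [hc]
        exact ⟨chebySeq_nonneg_finite _ hm2 k (by omega),
          chebySeq_nonneg_finite _ hm2 (k + 1) (by omega)⟩
    have hlv : cs.length v < n := by omega
    have Nvi := ih (cs.length v) hlv v rfl i hvi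
    have Nvj := ih (cs.length v) hlv v rfl j hvj
    rw [hw_eq, G.rho_mul, G.altWord_act i j k]
    by_cases h : Even k
    · rw [if_pos h, map_add, map_smul, map_smul]
      exact G.isNonnegComb_smul_add hnn.2 hnn.1 Nvi Nvj
    · rw [if_neg h, map_add, map_smul, map_smul]
      exact G.isNonnegComb_smul_add hnn.1 hnn.2 Nvi Nvj

theorem isNonnegComb_neg_of_leftDescent (w : W) (i : B) (h : cs.IsLeftDescent w i) :
    G.IsNonnegComb (- (G.ρ w⁻¹ (G.root i))) := by
  have hr : cs.IsRightDescent w⁻¹ i := cs.isRightDescent_inv_iff.mpr h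
  set u := w⁻¹ * cs.simple i with hu
  have husi : u * cs.simple i = w⁻¹ := by
    rw [hu, mul_assoc, cs.simple_mul_simple_self, mul_one]
  have hni : ¬ cs.IsRightDescent u i := by
    intro hd
    have h1 := cs.isRightDescent_iff.mp hd
    have h2 := cs.isRightDescent_iff.mp hr
    rw [husi] at h1
    rw [← hu] at h2
    omega
  have hN := G.isNonnegComb_rho_root (cs.length u) u rfl i hni
  have he : G.ρ w⁻¹ (G.root i) = - G.ρ u (G.root i) := by
    rw [← husi, G.rho_mul, G.rho_simple_root_self, map_neg]
  rw [he, neg_neg]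
  exact hN

end GeomRep

/-- The closed fundamental chamber is a fundamental domain for the `W`-action
on the Tits cone. -/
theorem chamber_fundamentalDomain {B : Type*} {W : Type*} [Group W] {M : CoxeterMatrix B}
    (cs : CoxeterSystem M W) {V : Type*} [AddCommGroup V] [Module ℝ V]
    (G : GeomRep M cs V) :
    (∀ v ∈ G.titsCone, ∃ w : W, G.ρ w v ∈ G.chamber) ∧
      (∀ v ∈ G.chamber, ∀ v' ∈ G.chamber, ∀ w : W, G.ρ w v = v' → v = v') := by
  constructor
  · rintro v hv
    rw [GeomRep.titsCone] at hv
    simp only [Set.mem_iUnion, Set.mem_image] at hv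
    obtain ⟨u, x, hx, rfl⟩ := hv
    refine ⟨u⁻¹, ?_⟩
    have h : G.ρ u⁻¹ (G.ρ u x) = x := by rw [← G.rho_mul, inv_mul_cancel, G.rho_one]
    rw [h]; exact hx
  · have key : ∀ n : ℕ, ∀ w : W, cs.length w = n →
        ∀ v ∈ G.chamber, ∀ v' ∈ G.chamber, G.ρ w v = v' → v = v' := by
      intro n
      induction n using Nat.strong_induction_on with
      | _ n ih =>
        intro w hw v hv v' hv' heq
        rcases eq_or_ne w 1 with rfl | hne
        · rw [G.rho_one] at heq; exact heq
        obtain ⟨i, hi⟩ := cs.exists_leftDescent_of_ne_one hne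
        have hneg := G.isNonnegComb_neg_of_leftDescent w i hi
        have h1 : 0 ≤ G.form v' (G.root i) := hv' i
        have h2 : G.form v' (G.root i) ≤ 0 := by
          have e : G.ρ w (G.ρ w⁻¹ (G.root i)) = G.root i := by
            rw [← G.rho_mul, mul_inv_cancel, G.rho_one]
          have e2 : G.form v' (G.root i) = G.form v (G.ρ w⁻¹ (G.root i)) := by
            conv_lhs => rw [← heq, ← e]
            rw [G.form_preserved]
          rw [e2]
          have h3 := G.form_nonneg_of_chamber hv hneg
          rw [map_neg] at h3
          linarith
        have h0 : G.form (G.root i) v' = 0 := by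
          rw [G.form_symm]; linarith
        have hfix : G.ρ (cs.simple i) v' = v' := by
          rw [G.simple_act, h0]
          simp
        have hlen : cs.length (cs.simple i * w) < n := by rw [← hw]; exact hi
        apply ih _ hlen (cs.simple i * w) rfl v hv v' hv'
        rw [G.rho_mul, heq, hfix]
    intro v hv v' hv' w heq
    exact key (cs.length w) w rfl v hv v' hv' heq
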